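/- arXiv:2205.11313 — 10 statements merged into one kernel-verified Lean document; each statement's English description precedes it below -/
import Mathlib

section
/- (Necessity direction of Myerson's lemma for single-item auctions.) If a deterministic single-item auction mechanism is truthful, then its allocation rule is monotone: whenever bidder i wins under bid vector b, and b' agrees with b in all coordinates except that b'_i > b_i, bidder i also wins under b'. -/
/-- Necessity direction of Myerson's lemma for single-item auctions:
a truthful deterministic mechanism has a monotone allocation rule. -/
theorem truthful_implies_monotone
    (n : ℕ) (A : (Fin n → ℝ) → Option (Fin n))
    (p : (Fin n → ℝ) → Fin n → ℝ)
    -- payments are nonnegative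
    (hp_nonneg : ∀ b : Fin n → ℝ, (∀ j, 0 ≤ b j) → ∀ i, 0 ≤ p b i)
    -- every non-winner pays 0
    (hp_loser : ∀ b : Fin n → ℝ, (∀ j, 0 ≤ b j) → ∀ i, A b ≠ some i → p b i = 0)
    -- truthfulness: bidding one's true value maximizes utility, and
    -- a truthtelling bidder has nonnegative utility
    (htruthful : ∀ (i : Fin n) (v : ℝ), 0 ≤ v → ∀ b : Fin n → ℝ, (∀ j, 0 ≤ b j) →
      (∀ x : ℝ, 0 ≤ x →
        (if A (Function.update b i x) = some i then v - p (Function.update b i x) i else 0) ≤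
        (if A (Function.update b i v) = some i then v - p (Function.update b i v) i else 0)) ∧
      0 ≤ (if A (Function.update b i v) = some i then v - p (Function.update b i v) i else 0)) :
    -- monotonicity of the allocation rule
    ∀ b b' : Fin n → ℝ, (∀ j, 0 ≤ b j) → (∀ j, 0 ≤ b' j) →
      ∀ i : Fin n, A b = some i → (∀ j, j ≠ i → b' j = b j) → b i < b' i →
        A b' = some i := by
  intro b b' hb hb' i hwin hagree hlt
  by_contra hlose
  -- b' = update b i (b' i)
  have hb'eq : b' = Function.update b i (b' i) := by
    funext j
    by_cases hj : j = i
    · subst hj; simp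
    · simp [Function.update_of_ne hj, hagree j hj]
  have hbeq : b = Function.update b i (b i) := by simp
  -- truthfulness with true value b i: price at b is at most b i
  have h1 := (htruthful i (b i) (hb i) b hb).2
  rw [← hbeq, if_pos hwin] at h1
  -- truthfulness with true value b' i, deviation to b i
  have h2 := (htruthful i (b' i) (hb' i) b hb).1 (b i) (hb i)
  rw [← hbeq, ← hb'eq, if_pos hwin, if_neg hlose] at h2
  -- b' i - p b i ≤ 0, but p b i ≤ b i < b' i
  linarith
end

section
/- (Sufficiency direction of Myerson's lemma for single-item auctions.) Let A be a monotone allocation rule for a single-item auction: whenever bidder i wins under bid vector b and b' agrees with b except that b'_i > b_i, bidder i also wins under b'. Define the payment rule in which every non-winner pays 0 and the winner i under bid vector b pays the threshold bid theta_i(b_{-i}) = inf{ x >= 0 : i wins when bidding x against the other bids b_{-i} }. Then the resulting mechanism is truthful: for every bidder i, every value v_i >= 0, and all bids of the others, bidding b_i = v_i maximizes bidder i's utility, and every truthtelling bidder has nonnegative utility. -/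
/-- Sufficiency direction of Myerson's lemma for single-item auctions:
a monotone allocation rule together with the threshold-bid payment rule
(non-winners pay 0, the winner pays the infimum bid with which he would
still win) yields a truthful mechanism. -/
theorem monotone_with_threshold_payment_truthful
    (n : ℕ) (A : (Fin n → ℝ) → Option (Fin n))
    -- monotonicity of the allocation rule
    (hmono : ∀ b b' : Fin n → ℝ, ∀ i : Fin n, A b = some i →
      (∀ j, j ≠ i → b' j = b j) → b i < b' i → A b' = some i)
    (p : (Fin n → ℝ) → Fin n → ℝ)
    -- the payment rule: non-winners pay 0; the winner pays his threshold bid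
    (hp : ∀ b : Fin n → ℝ, ∀ i : Fin n,
      p b i = if A b = some i
        then sInf {x : ℝ | 0 ≤ x ∧ A (Function.update b i x) = some i}
        else 0) :
    -- truthfulness: bidding one's true value maximizes utility, and
    -- a truthtelling bidder has nonnegative utility
    ∀ (i : Fin n) (v : ℝ), 0 ≤ v → ∀ b : Fin n → ℝ, (∀ j, 0 ≤ b j) →
      (∀ x : ℝ, 0 ≤ x →
        (if A (Function.update b i x) = some i then v - p (Function.update b i x) i else 0) ≤
        (if A (Function.update b i v) = some i then v - p (Function.update b i v) i else 0)) ∧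
      0 ≤ (if A (Function.update b i v) = some i then v - p (Function.update b i v) i else 0) := by
  intro i v hv b hb
  set S : Set ℝ := {x : ℝ | 0 ≤ x ∧ A (Function.update b i x) = some i} with hS
  have hpay : ∀ x : ℝ, A (Function.update b i x) = some i →
      p (Function.update b i x) i = sInf S := by
    intro x hx
    rw [hp, if_pos hx]
    congr 1
    ext y
    simp [hS, Function.update_idem]
  have hbdd : BddBelow S := ⟨0, fun y hy => hy.1⟩
  have hwin : ∀ hvw : A (Function.update b i v) = some i,
      0 ≤ v - p (Function.update b i v) i := by
    intro hvw
    rw [hpay v hvw]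
    have : sInf S ≤ v := csInf_le hbdd ⟨hv, hvw⟩
    linarith
  constructor
  · intro x hx
    by_cases hxw : A (Function.update b i x) = some i
    · rw [if_pos hxw, hpay x hxw]
      by_cases hvw : A (Function.update b i v) = some i
      · rw [if_pos hvw, hpay v hvw]
      · rw [if_neg hvw]
        have hlb : ∀ y ∈ S, v ≤ y := by
          intro y hy
          by_contra hlt
          push_neg at hlt
          exact hvw (hmono (Function.update b i y) (Function.update b i v) i hy.2
            (fun j hj => by simp [hj]) (by simpa using hlt))
        have : v ≤ sInf S := le_csInf ⟨x, hx, hxw⟩ hlb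
        linarith
    · rw [if_neg hxw]
      by_cases hvw : A (Function.update b i v) = some i
      · rw [if_pos hvw]; exact hwin hvw
      · simp [hvw]
  · by_cases hvw : A (Function.update b i v) = some i
    · rw [if_pos hvw]; exact hwin hvw
    · simp [hvw]
end

section
/- (Monotonicity of Algorithm 1, the key step in its truthfulness.) The allocation rule of Algorithm 1 is monotone: for any fixed predicted values v_hat_1 >= v_hat_2 > 0 and parameter gamma >= 1, if bidder i wins under bids (b_1, b_2), then bidder i still wins when he unilaterally raises his own bid (i.e., under any bid vector that agrees with (b_1,b_2) except that bidder i's bid is strictly larger). -/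
open Classical

/-- The allocation rule of Algorithm 1 (two-bidder single-item auction with
predictions).  Bidder `0` is the bidder with the larger predicted value
`vh1` and bidder `1` has predicted value `vh2`.  Ties are broken in favor
of bidder `0`.  `none` means there is no winner. -/
noncomputable def alg1Winner (vh1 vh2 γ b1 b2 : ℝ) : Option (Fin 2) :=
  if vh2 < vh1 / γ ^ 2 then
    -- bar branch: br(1) = vh1/γ, br(2) = 1, highest bidder in S wins
    if vh1 / γ ≤ b1 ∧ (¬ (1 ≤ b2) ∨ b2 ≤ b1) then some 0
    else if 1 ≤ b2 then some 1
    else none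
  else
    if vh1 / γ ≤ b1 then some 0
    else
      -- weighted branch: w1 = 1/γ², w2 = 1, S = {i : bᵢ ≥ 1}
      if 1 ≤ b1 ∧ (¬ (1 ≤ b2) ∨ b2 ≤ (1 / γ ^ 2) * b1) then some 0
      else if 1 ≤ b2 then some 1
      else none

/-- Monotonicity of the allocation rule of Algorithm 1: a winner keeps
winning when he unilaterally raises his own bid. -/
theorem alg1Winner_monotone (vh1 vh2 γ b1 b2 : ℝ)
    (h12 : vh2 ≤ vh1) (hvh2 : 0 < vh2) (hγ : 1 ≤ γ)
    (hb1 : 0 ≤ b1) (hb2 : 0 ≤ b2) :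
    (alg1Winner vh1 vh2 γ b1 b2 = some 0 →
      ∀ b1' : ℝ, b1 < b1' → alg1Winner vh1 vh2 γ b1' b2 = some 0) ∧
    (alg1Winner vh1 vh2 γ b1 b2 = some 1 →
      ∀ b2' : ℝ, b2 < b2' → alg1Winner vh1 vh2 γ b1 b2' = some 1) := by
  have hγ0 : (0:ℝ) < γ := lt_of_lt_of_le one_pos hγ
  have hw : (0:ℝ) < 1 / γ ^ 2 := by positivity
  constructor
  · intro h b1' hlt
    unfold alg1Winner at h ⊢
    by_cases hbar : vh2 < vh1 / γ ^ 2
    · rw [if_pos hbar] at h ⊢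
      by_cases hc : vh1 / γ ≤ b1 ∧ (¬ (1 ≤ b2) ∨ b2 ≤ b1)
      · rw [if_pos ⟨le_of_lt (lt_of_le_of_lt hc.1 hlt), by
          rcases hc.2 with h2 | h2
          · exact Or.inl h2
          · exact Or.inr (le_of_lt (lt_of_le_of_lt h2 hlt))⟩]
      · rw [if_neg hc] at h
        split_ifs at h <;> simp_all
    · rw [if_neg hbar] at h ⊢
      by_cases hA : vh1 / γ ≤ b1
      · rw [if_pos (le_of_lt (lt_of_le_of_lt hA hlt))]
      · rw [if_neg hA] at h
        by_cases hA' : vh1 / γ ≤ b1'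
        · rw [if_pos hA']
        · rw [if_neg hA']
          by_cases hB : 1 ≤ b1 ∧ (¬ (1 ≤ b2) ∨ b2 ≤ (1 / γ ^ 2) * b1)
          · rw [if_pos ⟨le_of_lt (lt_of_le_of_lt hB.1 hlt), by
              rcases hB.2 with h2 | h2
              · exact Or.inl h2
              · exact Or.inr (le_trans h2 (by nlinarith))⟩]
          · rw [if_neg hB] at h
            split_ifs at h <;> simp_all
  · intro h b2' hlt
    unfold alg1Winner at h ⊢
    by_cases hbar : vh2 < vh1 / γ ^ 2
    · rw [if_pos hbar] at h ⊢
      by_cases hc : vh1 / γ ≤ b1 ∧ (¬ (1 ≤ b2) ∨ b2 ≤ b1)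
      · rw [if_pos hc] at h; simp at h
      · rw [if_neg hc] at h
        by_cases h2 : 1 ≤ b2
        · have hc' : ¬ (vh1 / γ ≤ b1 ∧ (¬ (1 ≤ b2') ∨ b2' ≤ b1)) := by
            intro ⟨ha, hb⟩
            apply hc
            refine ⟨ha, Or.inr ?_⟩
            rcases hb with hb | hb
            · exact absurd (by linarith : (1:ℝ) ≤ b2') hb
            · linarith
          rw [if_neg hc', if_pos (by linarith : (1:ℝ) ≤ b2')]
        · rw [if_neg h2] at h; simp at h
    · rw [if_neg hbar] at h ⊢
      by_cases hA : vh1 / γ ≤ b1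
      · rw [if_pos hA] at h; simp at h
      · rw [if_neg hA] at h ⊢
        by_cases hB : 1 ≤ b1 ∧ (¬ (1 ≤ b2) ∨ b2 ≤ (1 / γ ^ 2) * b1)
        · rw [if_pos hB] at h; simp at h
        · by_cases h2 : 1 ≤ b2
          · have hB' : ¬ (1 ≤ b1 ∧ (¬ (1 ≤ b2') ∨ b2' ≤ (1 / γ ^ 2) * b1)) := by
              intro ⟨ha, hb⟩
              apply hB
              refine ⟨ha, Or.inr ?_⟩
              rcases hb with hb | hb
              · exact absurd (by linarith : (1:ℝ) ≤ b2') hb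
              · linarith
            rw [if_neg hB', if_pos (by linarith : (1:ℝ) ≤ b2')]
          · rw [if_neg hB, if_neg h2] at h; simp at h
end

section
/- (Lemma 3.4.) Suppose gamma >= 1, eta > gamma, h >= 1, the true values satisfy 1 <= v1_star <= h and 1 <= v2_star <= h, the predicted values satisfy v_hat_1 >= v_hat_2 > 0 with v_hat_2 >= v_hat_1/gamma^2, and the prediction-error bounds v_hat_i <= eta * vi_star and vi_star <= eta * v_hat_i hold for i = 1,2. If both bidders bid truthfully (b_i = vi_star), then Algorithm 1 has a winner j, and max(v1_star, v2_star) <= max( gamma^2 * eta^2, h * eta / gamma^2 ) * theta(j), where theta(j) is the winner's threshold bid; i.e., the approximation ratio OPT/PAY is at most max(gamma^2 * eta^2, h * eta / gamma^2). -/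
open Classical

/-- The threshold bid of bidder `j` in Algorithm 1 when the other bidder's
bid is fixed as under truthful bidding. -/
noncomputable def alg1Threshold (vh1 vh2 γ v1star v2star : ℝ) (j : Fin 2) : ℝ :=
  if j = 0 then sInf {x : ℝ | 0 ≤ x ∧ alg1Winner vh1 vh2 γ x v2star = some 0}
  else sInf {x : ℝ | 0 ≤ x ∧ alg1Winner vh1 vh2 γ v1star x = some 1}

set_option maxHeartbeats 1600000 in
/-- Lemma 3.4: when `η > γ` and `v̂₂ ≥ v̂₁/γ²`, under truthful bidding
Algorithm 1 has a winner `j` and `OPT ≤ max(γ²η², hη/γ²) · θ(j)`, i.e. the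
approximation ratio is at most `max(γ²η², hη/γ²)`. -/
theorem alg1_large_eta (γ η h vh1 vh2 v1star v2star : ℝ)
    (hγ : 1 ≤ γ) (hηγ : γ < η) (hh : 1 ≤ h)
    (hv1lo : 1 ≤ v1star) (hv1hi : v1star ≤ h)
    (hv2lo : 1 ≤ v2star) (hv2hi : v2star ≤ h)
    (hvh2pos : 0 < vh2) (hvh12 : vh2 ≤ vh1)
    (herr1a : vh1 ≤ η * v1star) (herr1b : v1star ≤ η * vh1)
    (herr2a : vh2 ≤ η * v2star) (herr2b : v2star ≤ η * vh2)
    (hlow : vh1 / γ ^ 2 ≤ vh2) :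
    ∃ j : Fin 2, alg1Winner vh1 vh2 γ v1star v2star = some j ∧
      max v1star v2star ≤ max (γ ^ 2 * η ^ 2) (h * η / γ ^ 2) *
        alg1Threshold vh1 vh2 γ v1star v2star j := by
  have hγ0 : (0:ℝ) < γ := lt_of_lt_of_le one_pos hγ
  have hγ2 : (0:ℝ) < γ ^ 2 := by positivity
  have hη1 : (1:ℝ) ≤ η := le_trans hγ hηγ.le
  have hnb : ¬ (vh2 < vh1 / γ ^ 2) := not_lt.mpr hlow
  have hvh1pos : (0:ℝ) < vh1 := lt_of_lt_of_le hvh2pos hvh12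
  have hvh1g : vh1 ≤ γ ^ 2 * vh2 := by
    rw [div_le_iff₀ hγ2] at hlow; linarith [hlow]
  set M := max (γ ^ 2 * η ^ 2) (h * η / γ ^ 2) with hMdef
  have hM1 : γ ^ 2 * η ^ 2 ≤ M := le_max_left _ _
  have hM0 : (0:ℝ) ≤ M := le_trans (by positivity) hM1
  by_cases hcase : vh1 / γ ≤ v1star ∨ v2star ≤ (1 / γ ^ 2) * v1star
  · -- bidder 0 wins
    have hw : alg1Winner vh1 vh2 γ v1star v2star = some 0 := by
      simp only [alg1Winner, if_neg hnb]
      by_cases hA : vh1 / γ ≤ v1star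
      · rw [if_pos hA]
      · rcases hcase with h1 | h2
        · exact absurd h1 hA
        · rw [if_neg hA, if_pos ⟨hv1lo, Or.inr h2⟩]
    refine ⟨0, hw, ?_⟩
    have hθ : alg1Threshold vh1 vh2 γ v1star v2star 0 =
        sInf {x : ℝ | 0 ≤ x ∧ alg1Winner vh1 vh2 γ x v2star = some 0} := by
      simp [alg1Threshold]
    set t := min (vh1 / γ) (γ ^ 2 * v2star) with htdef
    have hlb : ∀ x ∈ {x : ℝ | 0 ≤ x ∧ alg1Winner vh1 vh2 γ x v2star = some 0}, t ≤ x := by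
      rintro x ⟨hx0, hxw⟩
      simp only [alg1Winner, if_neg hnb] at hxw
      by_cases hA : vh1 / γ ≤ x
      · exact le_trans (min_le_left _ _) hA
      · rw [if_neg hA] at hxw
        by_cases hB : 1 ≤ x ∧ (¬ (1 ≤ v2star) ∨ v2star ≤ (1 / γ ^ 2) * x)
        · rcases hB.2 with hc | hc
          · exact absurd hv2lo hc
          · have : γ ^ 2 * v2star ≤ x := by
              rw [one_div, inv_mul_eq_div, le_div_iff₀ hγ2] at hc
              linarith
            exact le_trans (min_le_right _ _) this
        · rw [if_neg hB] at hxw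
          by_cases hC : 1 ≤ v2star
          · rw [if_pos hC] at hxw; exact absurd hxw (by decide)
          · rw [if_neg hC] at hxw; exact absurd hxw (by simp)
    have hne : {x : ℝ | 0 ≤ x ∧ alg1Winner vh1 vh2 γ x v2star = some 0}.Nonempty :=
      ⟨v1star, le_trans zero_le_one hv1lo, hw⟩
    have hsinf : t ≤ sInf {x : ℝ | 0 ≤ x ∧ alg1Winner vh1 vh2 γ x v2star = some 0} :=
      le_csInf hne hlb
    have hη0 : (0:ℝ) ≤ η := le_trans zero_le_one hη1
    have hv20 : (0:ℝ) ≤ v2star := le_trans zero_le_one hv2lo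
    have hbound : max v1star v2star ≤ M * t := by
      have h1 : max v1star v2star ≤ M * (vh1 / γ) := by
        have hm : max v1star v2star ≤ η * vh1 := by
          apply max_le
          · exact herr1b
          · nlinarith [mul_le_mul_of_nonneg_left hvh12 hη0]
        have heq : γ ^ 2 * η ^ 2 * (vh1 / γ) = γ * η ^ 2 * vh1 := by
          field_simp
        have hstep : η * vh1 ≤ γ * η ^ 2 * vh1 := by
          nlinarith [mul_nonneg (mul_nonneg (sub_nonneg.mpr (by nlinarith : (1:ℝ) ≤ γ * η)) hη0) hvh1pos.le]
        have hstep2 : γ ^ 2 * η ^ 2 * (vh1 / γ) ≤ M * (vh1 / γ) :=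
          mul_le_mul_of_nonneg_right hM1 (le_of_lt (div_pos hvh1pos hγ0))
        linarith [heq ▸ hstep2]
      have h2 : max v1star v2star ≤ M * (γ ^ 2 * v2star) := by
        have hm : max v1star v2star ≤ η ^ 2 * γ ^ 2 * v2star := by
          apply max_le
          · nlinarith [mul_le_mul_of_nonneg_left hvh1g hη0,
              mul_le_mul_of_nonneg_left herr2a (by positivity : (0:ℝ) ≤ η * γ ^ 2)]
          · nlinarith [mul_nonneg (sub_nonneg.mpr (by nlinarith : (1:ℝ) ≤ η ^ 2 * γ ^ 2)) hv20]
        have hg1 : (1:ℝ) ≤ γ ^ 2 := by nlinarith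
        have hstep : η ^ 2 * γ ^ 2 * v2star ≤ γ ^ 2 * η ^ 2 * (γ ^ 2 * v2star) := by
          nlinarith [mul_nonneg (sub_nonneg.mpr hg1) (mul_nonneg (mul_nonneg (sq_nonneg η) hγ2.le) hv20)]
        have hstep2 : γ ^ 2 * η ^ 2 * (γ ^ 2 * v2star) ≤ M * (γ ^ 2 * v2star) :=
          mul_le_mul_of_nonneg_right hM1 (mul_nonneg hγ2.le hv20)
        linarith
      rcases le_total (vh1 / γ) (γ ^ 2 * v2star) with hmm | hmm
      · rw [htdef, min_eq_left hmm]; exact h1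
      · rw [htdef, min_eq_right hmm]; exact h2
    rw [hθ]
    calc max v1star v2star ≤ M * t := hbound
      _ ≤ M * sInf {x : ℝ | 0 ≤ x ∧ alg1Winner vh1 vh2 γ x v2star = some 0} :=
        mul_le_mul_of_nonneg_left hsinf hM0
  · -- bidder 1 wins
    push_neg at hcase
    obtain ⟨hA, hB⟩ := hcase
    have hA' : ¬ (vh1 / γ ≤ v1star) := not_le.mpr hA
    have hw : alg1Winner vh1 vh2 γ v1star v2star = some 1 := by
      simp only [alg1Winner, if_neg hnb, if_neg hA']
      rw [if_neg, if_pos hv2lo]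
      rintro ⟨-, hc | hc⟩
      · exact hc hv2lo
      · exact absurd hc (not_le.mpr hB)
    refine ⟨1, hw, ?_⟩
    have hθ : alg1Threshold vh1 vh2 γ v1star v2star 1 =
        sInf {x : ℝ | 0 ≤ x ∧ alg1Winner vh1 vh2 γ v1star x = some 1} := by
      simp [alg1Threshold]
    set t := (1 / γ ^ 2) * v1star with htdef
    have hlb : ∀ x ∈ {x : ℝ | 0 ≤ x ∧ alg1Winner vh1 vh2 γ v1star x = some 1}, t ≤ x := by
      rintro x ⟨hx0, hxw⟩
      simp only [alg1Winner, if_neg hnb, if_neg hA'] at hxw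
      by_cases hB' : 1 ≤ v1star ∧ (¬ (1 ≤ x) ∨ x ≤ (1 / γ ^ 2) * v1star)
      · rw [if_pos hB'] at hxw; exact absurd hxw (by decide)
      · push_neg at hB'
        exact (hB' hv1lo).2.le
    have hne : {x : ℝ | 0 ≤ x ∧ alg1Winner vh1 vh2 γ v1star x = some 1}.Nonempty :=
      ⟨v2star, le_trans zero_le_one hv2lo, hw⟩
    have hsinf : t ≤ sInf {x : ℝ | 0 ≤ x ∧ alg1Winner vh1 vh2 γ v1star x = some 1} :=
      le_csInf hne hlb
    have hbound : max v1star v2star ≤ M * t := by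
      have hη0 : (0:ℝ) ≤ η := le_trans zero_le_one hη1
      have hm : max v1star v2star ≤ η ^ 2 * v1star := by
        apply max_le
        · nlinarith [mul_nonneg (sub_nonneg.mpr (by nlinarith : (1:ℝ) ≤ η ^ 2)) (le_trans zero_le_one hv1lo)]
        · nlinarith [mul_le_mul_of_nonneg_left hvh12 hη0, mul_le_mul_of_nonneg_left herr1a hη0]
      have hMt : γ ^ 2 * η ^ 2 * t = η ^ 2 * v1star := by
        rw [htdef]; field_simp
      have ht0 : (0:ℝ) ≤ t := by
        rw [htdef]; positivity
      nlinarith [mul_le_mul_of_nonneg_right hM1 ht0]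
    rw [hθ]
    calc max v1star v2star ≤ M * t := hbound
      _ ≤ M * sInf {x : ℝ | 0 ≤ x ∧ alg1Winner vh1 vh2 γ v1star x = some 1} :=
        mul_le_mul_of_nonneg_left hsinf hM0
end

section
/- (Lemma 5.2: consistency of the scheduling mechanism under perfect predictions.) Let t be a processing-time matrix with t(i,j) > 0 for all machines i and jobs j, and let gamma be a real with 1 <= gamma <= m. Define t_bar(i,j) = min( t(i,j), (m/gamma) * min over i' of t(i',j) ). Let a_bar be an allocation minimizing the makespan for t_bar. Call a job j greedy if t(a_bar(j), j) > t_bar(a_bar(j), j), and non-greedy otherwise. Define the allocation a by: a(j) = a_bar(j) for every non-greedy job j, and for every greedy job j, a(j) is a machine attaining min over i of t(i,j). Then F(a, t) <= (1 + (1 - 1/m) * gamma) * MS(t). -/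
/-- The makespan of allocation `a` (jobs to machines) for the
processing-time matrix `t`: the largest total load of a machine. -/
noncomputable def mkspan {m n : ℕ} (a : Fin n → Fin m) (t : Fin m → Fin n → ℝ) : ℝ :=
  sSup {x : ℝ | ∃ i : Fin m, x = ∑ j : Fin n, if a j = i then t i j else 0}

/-- The minimum makespan of the scheduling instance `t` over all allocations. -/
noncomputable def optMS {m n : ℕ} (t : Fin m → Fin n → ℝ) : ℝ :=
  sInf {x : ℝ | ∃ a : Fin n → Fin m, x = mkspan a t}

noncomputable def schedLoad {m n : ℕ} (a : Fin n → Fin m) (t : Fin m → Fin n → ℝ)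
    (i : Fin m) : ℝ :=
  ∑ j : Fin n, if a j = i then t i j else 0

lemma mkspan_eq_sSup_range {m n : ℕ} (a : Fin n → Fin m) (t : Fin m → Fin n → ℝ) :
    mkspan a t = sSup (Set.range (schedLoad a t)) := by
  unfold mkspan schedLoad
  congr 1
  ext x
  simp [eq_comm]

lemma schedLoad_le_mkspan {m n : ℕ} (a : Fin n → Fin m) (t : Fin m → Fin n → ℝ)
    (i : Fin m) : schedLoad a t i ≤ mkspan a t := by
  rw [mkspan_eq_sSup_range]
  exact le_csSup (Set.Finite.bddAbove (Set.finite_range _)) ⟨i, rfl⟩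

lemma mkspan_le {m n : ℕ} (hm : 0 < m) (a : Fin n → Fin m) (t : Fin m → Fin n → ℝ)
    {C : ℝ} (h : ∀ i, schedLoad a t i ≤ C) : mkspan a t ≤ C := by
  rw [mkspan_eq_sSup_range]
  exact csSup_le ⟨schedLoad a t ⟨0, hm⟩, ⟨_, rfl⟩⟩ (by rintro x ⟨i, rfl⟩; exact h i)

lemma schedLoad_nonneg {m n : ℕ} (a : Fin n → Fin m) {t : Fin m → Fin n → ℝ}
    (h : ∀ i j, 0 ≤ t i j) (i : Fin m) : 0 ≤ schedLoad a t i :=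
  Finset.sum_nonneg fun j _ => by by_cases hj : a j = i <;> simp [hj, h]

lemma mkspan_mono {m n : ℕ} (hm : 0 < m) (a : Fin n → Fin m)
    {t1 t2 : Fin m → Fin n → ℝ} (h : ∀ i j, t1 i j ≤ t2 i j) :
    mkspan a t1 ≤ mkspan a t2 :=
  mkspan_le hm a t1 fun i => le_trans
    (Finset.sum_le_sum fun j _ => by by_cases hj : a j = i <;> simp [hj, h])
    (schedLoad_le_mkspan a t2 i)

/-- Lemma 5.2: consistency of the scheduling mechanism under perfect
predictions.  With `t̄(i,j) = min(t(i,j), (m/γ)·minᵢ' t(i',j))`, an optimal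
allocation `ā` for `t̄`, and the allocation `a` that follows `ā` on
non-greedy jobs and assigns each greedy job to a fastest machine, the
makespan of `a` on `t` is at most `(1 + (1 - 1/m)γ) · MS(t)`. -/
theorem scheduling_consistency
    (m n : ℕ) (hm : 0 < m) (γ : ℝ) (hγ1 : 1 ≤ γ) (hγm : γ ≤ m)
    (t : Fin m → Fin n → ℝ) (ht : ∀ i j, 0 < t i j)
    (tbar : Fin m → Fin n → ℝ)
    (htbar : ∀ i j, tbar i j = min (t i j) ((m / γ) * ⨅ i' : Fin m, t i' j))
    (abar : Fin n → Fin m)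
    (habar : ∀ a' : Fin n → Fin m, mkspan abar tbar ≤ mkspan a' tbar)
    (a : Fin n → Fin m)
    -- non-greedy jobs are assigned as in `ā`
    (ha_non : ∀ j : Fin n, ¬ tbar (abar j) j < t (abar j) j → a j = abar j)
    -- greedy jobs are assigned to a machine attaining `minᵢ t(i,j)`
    (ha_greedy : ∀ j : Fin n, tbar (abar j) j < t (abar j) j →
      ∀ i : Fin m, t (a j) j ≤ t i j) :
    mkspan a t ≤ (1 + (1 - 1 / m) * γ) * optMS t := by
  haveI : Nonempty (Fin m) := ⟨⟨0, hm⟩⟩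
  have hm' : (0:ℝ) < m := by exact_mod_cast hm
  have hγ0 : (0:ℝ) < γ := lt_of_lt_of_le one_pos hγ1
  set μ : Fin n → ℝ := fun j => ⨅ i' : Fin m, t i' j with hμdef
  have hμle : ∀ i j, μ j ≤ t i j := fun i j =>
    ciInf_le (Set.Finite.bddBelow (Set.finite_range _)) i
  have hμ0 : ∀ j, 0 ≤ μ j := fun j => le_ciInf fun i => (ht i j).le
  have htb_le : ∀ i j, tbar i j ≤ t i j := fun i j => by
    rw [htbar]; exact min_le_left _ _
  have htb0 : ∀ i j, 0 ≤ tbar i j := fun i j => by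
    rw [htbar]
    exact le_min (ht i j).le (mul_nonneg (le_of_lt (div_pos hm' hγ0)) (hμ0 j))
  set M := mkspan abar tbar with hMdef
  have hMopt : M ≤ optMS t := by
    refine le_csInf ⟨mkspan a t, ⟨a, rfl⟩⟩ ?_
    rintro x ⟨a', rfl⟩
    exact le_trans (habar a') (mkspan_mono hm a' htb_le)
  have hgreedy_min : ∀ j, tbar (abar j) j < t (abar j) j → t (a j) j = μ j := fun j hg =>
    le_antisymm (le_ciInf fun i => ha_greedy j hg i) (hμle (a j) j)
  have hgreedy_tbar : ∀ j, tbar (abar j) j < t (abar j) j →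
      tbar (abar j) j = (m / γ) * μ j := by
    intro j hg
    rw [htbar] at hg ⊢
    rcases le_or_gt (t (abar j) j) ((m / γ) * μ j) with h | h
    · rw [min_eq_left h] at hg; exact absurd hg (lt_irrefl _)
    · exact min_eq_right h.le
  have key : ∀ i, schedLoad a t i ≤ (1 + (1 - 1 / m) * γ) * M := by
    intro i
    have step1 : schedLoad a t i ≤ schedLoad abar tbar i +
        (γ / m) * ∑ j : Fin n, (if a j = i ∧ abar j ≠ i then tbar (abar j) j else 0) := by
      unfold schedLoad
      rw [Finset.mul_sum, ← Finset.sum_add_distrib]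
      apply Finset.sum_le_sum
      intro j _
      by_cases haj : a j = i
      · by_cases hg : tbar (abar j) j < t (abar j) j
        · have h1 : t (a j) j = μ j := hgreedy_min j hg
          have h2 : tbar (abar j) j = (m / γ) * μ j := hgreedy_tbar j hg
          by_cases hb : abar j = i
          · simp only [haj, hb, ne_eq, not_true_eq_false, and_false, if_true, if_false,
              mul_zero, add_zero]
            have : t i j = μ j := by rw [← haj]; exact h1
            rw [this, ← hb, h2]
            have h1m : (1:ℝ) ≤ m / γ := (le_div_iff₀ hγ0).mpr (by linarith)
            nlinarith [hμ0 j]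
          · simp only [haj, hb, ne_eq, not_false_eq_true, and_true, if_true, if_false,
              zero_add]
            have : t i j = μ j := by rw [← haj]; exact h1
            rw [this, h2]
            have e : γ / (m:ℝ) * ((m:ℝ) / γ * μ j) = μ j := by
              field_simp
            exact le_of_eq e.symm
        · have hab : a j = abar j := ha_non j hg
          have hb : abar j = i := by rw [← hab, haj]
          have heq : tbar (abar j) j = t (abar j) j := le_antisymm (htb_le _ _) (not_lt.mp hg)
          simp only [haj, hb, ne_eq, not_true_eq_false, and_false, if_true, if_false,
            mul_zero, add_zero]
          rw [← hb, heq]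
      · simp only [haj, if_false, false_and, mul_zero, add_zero, zero_add]
        by_cases hb : abar j = i <;>
          simp [hb, htb0, mul_nonneg (le_of_lt (div_pos hγ0 hm')) (htb0 _ _),
            add_nonneg (htb0 i j) (mul_nonneg (le_of_lt (div_pos hγ0 hm')) (htb0 _ _))]
    have step2 : ∑ j : Fin n, (if a j = i ∧ abar j ≠ i then tbar (abar j) j else 0)
        ≤ ((m : ℝ) - 1) * M := by
      have h1 : ∀ j : Fin n, (if a j = i ∧ abar j ≠ i then tbar (abar j) j else 0)
          ≤ ∑ i' ∈ Finset.univ.erase i, (if abar j = i' then tbar i' j else 0) := by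
        intro j
        have hsum : ∑ i' ∈ Finset.univ.erase i, (if abar j = i' then tbar i' j else 0)
            = if abar j ∈ Finset.univ.erase i then tbar (abar j) j else 0 :=
          Finset.sum_ite_eq (Finset.univ.erase i) (abar j) (fun i' => tbar i' j)
        rw [hsum]
        by_cases hb : abar j ≠ i
        · have : abar j ∈ Finset.univ.erase i := Finset.mem_erase.mpr ⟨hb, Finset.mem_univ _⟩
          rw [if_pos this]
          by_cases haj : a j = i <;> simp [haj, hb, htb0]
        · simp only [ne_eq, hb, and_false, if_false]
          split <;> [exact htb0 _ _; exact le_refl 0]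
      calc ∑ j : Fin n, (if a j = i ∧ abar j ≠ i then tbar (abar j) j else 0)
          ≤ ∑ j : Fin n, ∑ i' ∈ Finset.univ.erase i,
              (if abar j = i' then tbar i' j else 0) :=
            Finset.sum_le_sum fun j _ => h1 j
        _ = ∑ i' ∈ Finset.univ.erase i, schedLoad abar tbar i' := Finset.sum_comm
        _ ≤ ∑ _i' ∈ Finset.univ.erase i, M :=
            Finset.sum_le_sum fun i' _ => schedLoad_le_mkspan abar tbar i'
        _ = ((Finset.univ.erase i).card : ℝ) * M := by
            rw [Finset.sum_const, nsmul_eq_mul]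
        _ = ((m : ℝ) - 1) * M := by
            rw [Finset.card_erase_of_mem (Finset.mem_univ i)]
            simp [Nat.cast_sub (Nat.one_le_iff_ne_zero.mpr hm.ne')]
    have hM0 : 0 ≤ M := le_trans (schedLoad_nonneg abar (fun i j => htb0 i j) ⟨0, hm⟩)
      (schedLoad_le_mkspan abar tbar ⟨0, hm⟩)
    calc schedLoad a t i
        ≤ schedLoad abar tbar i +
            (γ / m) * ∑ j : Fin n, (if a j = i ∧ abar j ≠ i then tbar (abar j) j else 0) :=
          step1
      _ ≤ M + (γ / m) * (((m : ℝ) - 1) * M) := by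
          have := schedLoad_le_mkspan abar tbar i
          have hmul := mul_le_mul_of_nonneg_left step2 (le_of_lt (div_pos hγ0 hm'))
          linarith
      _ = (1 + (1 - 1 / m) * γ) * M := by field_simp
  have coef : (0:ℝ) ≤ 1 + (1 - 1 / m) * γ := by
    have h1 : 1 / (m:ℝ) ≤ 1 := by
      rw [div_le_one hm']; exact_mod_cast hm
    nlinarith
  calc mkspan a t ≤ (1 + (1 - 1 / m) * γ) * M := mkspan_le hm a t key
    _ ≤ (1 + (1 - 1 / m) * γ) * optMS t := mul_le_mul_of_nonneg_left hMopt coef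
end

section
/- (Lemma 5.3: robustness of the scheduling mechanism.) Let m >= 1, let gamma be a real with 1 <= gamma <= m, let t be a processing-time matrix with t(i,j) > 0 for all machines i and jobs j, and let w be a weight matrix with gamma^2/m^2 <= w(i,j) <= 1 for all i, j. Suppose the allocation a assigns each job j to a machine minimizing the weighted processing time, i.e., for every job j and every machine i, w(a(j), j) * t(a(j), j) <= w(i, j) * t(i, j). Then F(a, t) <= (m^3 / gamma^2) * MS(t). -/
/-- Lemma 5.3: robustness of the scheduling mechanism.  If all weights lie
in `[γ²/m², 1]` and the allocation `a` assigns each job to a machine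
minimizing the weighted processing time, then the makespan of `a` is at
most `(m³/γ²) · MS(t)`. -/
theorem scheduling_robustness
    (m n : ℕ) (hm : 1 ≤ m) (γ : ℝ) (hγ1 : 1 ≤ γ) (hγm : γ ≤ m)
    (t : Fin m → Fin n → ℝ) (ht : ∀ i j, 0 < t i j)
    (w : Fin m → Fin n → ℝ)
    (hw1 : ∀ i j, γ ^ 2 / m ^ 2 ≤ w i j) (hw2 : ∀ i j, w i j ≤ 1)
    (a : Fin n → Fin m)
    (ha : ∀ (j : Fin n) (i : Fin m), w (a j) j * t (a j) j ≤ w i j * t i j) :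
    mkspan a t ≤ (m ^ 3 / γ ^ 2) * optMS t := by
  have hm0 : (0:ℝ) < m := by exact_mod_cast hm
  have hγ0 : (0:ℝ) < γ := lt_of_lt_of_le one_pos hγ1
  have hc : (0:ℝ) < (m:ℝ) ^ 3 / γ ^ 2 := by positivity
  have hne : Nonempty (Fin m) := ⟨⟨0, hm⟩⟩
  obtain ⟨i0⟩ := hne
  have hbdd : ∀ b : Fin n → Fin m,
      BddAbove {x : ℝ | ∃ i : Fin m, x = ∑ j : Fin n, if b j = i then t i j else 0} := by
    intro b
    have : {x : ℝ | ∃ i : Fin m, x = ∑ j : Fin n, if b j = i then t i j else 0}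
        = Set.range (fun i : Fin m => ∑ j : Fin n, if b j = i then t i j else 0) := by
      ext x; simp [eq_comm, Set.range]
    rw [this]; exact (Set.finite_range _).bddAbove
  have key : ∀ b : Fin n → Fin m,
      mkspan a t ≤ ((m:ℝ) ^ 3 / γ ^ 2) * mkspan b t := by
    intro b
    have hjob : ∀ j, t (a j) j ≤ ((m:ℝ)^2/γ^2) * t (b j) j := by
      intro j
      have h1 : w (a j) j * t (a j) j ≤ t (b j) j := by
        calc w (a j) j * t (a j) j ≤ w (b j) j * t (b j) j := ha j (b j)
          _ ≤ 1 * t (b j) j := mul_le_mul_of_nonneg_right (hw2 _ _) (ht _ _).le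
          _ = t (b j) j := one_mul _
      have hone : (1:ℝ) ≤ (m:ℝ)^2/γ^2 * w (a j) j := by
        have h2 := mul_le_mul_of_nonneg_left (hw1 (a j) j)
          (by positivity : (0:ℝ) ≤ (m:ℝ)^2/γ^2)
        calc (1:ℝ) = (m:ℝ)^2/γ^2 * (γ^2/(m:ℝ)^2) := by field_simp
          _ ≤ _ := h2
      calc t (a j) j = 1 * t (a j) j := (one_mul _).symm
        _ ≤ ((m:ℝ)^2/γ^2 * w (a j) j) * t (a j) j :=
            mul_le_mul_of_nonneg_right hone (ht _ _).le
        _ = ((m:ℝ)^2/γ^2) * (w (a j) j * t (a j) j) := by ring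
        _ ≤ ((m:ℝ)^2/γ^2) * t (b j) j :=
            mul_le_mul_of_nonneg_left h1 (by positivity)
    have hload : ∀ i : Fin m,
        (∑ j : Fin n, if a j = i then t i j else 0) ≤ ((m:ℝ)^3/γ^2) * mkspan b t := by
      intro i
      have h1 : (∑ j : Fin n, if a j = i then t i j else 0) ≤ ∑ j : Fin n, t (a j) j := by
        apply Finset.sum_le_sum
        intro j _
        by_cases h : a j = i
        · simp [h]
        · simp [h, (ht (a j) j).le]
      have h2 : (∑ j : Fin n, t (a j) j) ≤ ((m:ℝ)^2/γ^2) * ∑ j : Fin n, t (b j) j := by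
        rw [Finset.mul_sum]
        exact Finset.sum_le_sum fun j _ => hjob j
      have h3 : (∑ j : Fin n, t (b j) j)
          = ∑ i' : Fin m, ∑ j : Fin n, if b j = i' then t i' j else 0 := by
        rw [Finset.sum_comm]
        apply Finset.sum_congr rfl
        intro j _
        simp [Finset.sum_ite_eq]
      have h4 : ∀ i' : Fin m,
          (∑ j : Fin n, if b j = i' then t i' j else 0) ≤ mkspan b t := by
        intro i'
        exact le_csSup (hbdd b) ⟨i', rfl⟩
      have h5 : (∑ i' : Fin m, ∑ j : Fin n, if b j = i' then t i' j else 0)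
          ≤ (m:ℝ) * mkspan b t := by
        calc _ ≤ ∑ _i' : Fin m, mkspan b t := Finset.sum_le_sum fun i' _ => h4 i'
          _ = (m:ℝ) * mkspan b t := by simp [Finset.sum_const, nsmul_eq_mul]
      calc (∑ j : Fin n, if a j = i then t i j else 0)
          ≤ ((m:ℝ)^2/γ^2) * ∑ j : Fin n, t (b j) j := le_trans h1 h2
        _ ≤ ((m:ℝ)^2/γ^2) * ((m:ℝ) * mkspan b t) := by
            rw [h3]; exact mul_le_mul_of_nonneg_left h5 (by positivity)
        _ = ((m:ℝ)^3/γ^2) * mkspan b t := by ring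
    unfold mkspan
    refine csSup_le ⟨_, ⟨i0, rfl⟩⟩ ?_
    rintro x ⟨i, rfl⟩
    exact hload i
  have hopt : mkspan a t / ((m:ℝ)^3/γ^2) ≤ optMS t := by
    refine le_csInf ⟨mkspan a t, ⟨a, rfl⟩⟩ ?_
    rintro x ⟨b, rfl⟩
    rw [div_le_iff₀ hc]
    nlinarith [key b]
  calc mkspan a t = ((m:ℝ)^3/γ^2) * (mkspan a t / ((m:ℝ)^3/γ^2)) := by field_simp
    _ ≤ ((m:ℝ)^3/γ^2) * optMS t := mul_le_mul_of_nonneg_left hopt hc.le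
end

section
/- (Stability of the weighted assignment under small prediction error; key step in Lemma 5.4.) Let m >= 1, let gamma be a real with 1 <= gamma <= m, and let eta >= 1 satisfy eta^2 <= m/gamma. Let w, t_hat, t be positive real vectors indexed by the m machines, and let i be a machine such that (m/gamma) * w(i) * t_hat(i) <= w(i') * t_hat(i') for every machine i' != i. Suppose t(i'') <= eta * t_hat(i'') and t_hat(i'') <= eta * t(i'') for every machine i''. Then w(i) * t(i) <= w(i') * t(i') for every machine i' != i; that is, machine i still attains the minimum weighted processing time under the true times. -/
/-- Stability of the weighted assignment under small prediction error (key
step in Lemma 5.4): if machine `i` attains the minimum weighted predicted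
time with slack factor `m/γ`, and the true times are within factor `η` of
the predicted ones with `η² ≤ m/γ`, then `i` still attains the minimum
weighted processing time under the true times. -/
theorem weighted_assignment_stable
    (m : ℕ) (hm : 0 < m) (γ η : ℝ) (hγ1 : 1 ≤ γ) (hγm : γ ≤ m)
    (hη : 1 ≤ η) (hη2 : η ^ 2 ≤ m / γ)
    (w that t : Fin m → ℝ)
    (hw : ∀ i, 0 < w i) (hthat : ∀ i, 0 < that i) (ht : ∀ i, 0 < t i)
    (i : Fin m)
    (hi : ∀ i' : Fin m, i' ≠ i → (m / γ) * (w i * that i) ≤ w i' * that i')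
    (hpred1 : ∀ i'' : Fin m, t i'' ≤ η * that i'')
    (hpred2 : ∀ i'' : Fin m, that i'' ≤ η * t i'') :
    ∀ i' : Fin m, i' ≠ i → w i * t i ≤ w i' * t i' := by
  intro i' hi'
  have hγ0 : (0:ℝ) < γ := by linarith
  have hm0 : (0:ℝ) < (m:ℝ) := by exact_mod_cast hm
  have h1 := hi i' hi'
  have h2 := hpred1 i
  have h3 := hpred2 i'
  have hη0 : (0:ℝ) < η := by linarith
  -- w i * t i ≤ η * (w i * that i) ≤ η * (γ/m) * (w i' * that i')
  --          ≤ η² * (γ/m) * (w i' * t i') ≤ w i' * t i'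
  have hwi := hw i
  have hwi' := hw i'
  have hti' := ht i'
  have hdiv : η ^ 2 * γ ≤ m := by
    rw [le_div_iff₀ hγ0] at hη2; exact hη2
  have h1' : (m:ℝ) * (w i * that i) ≤ γ * (w i' * that i') := by
    rw [div_mul_eq_mul_div, div_le_iff₀ hγ0] at h1; linarith
  have s1 : (m:ℝ) * (w i * t i) ≤ (m:ℝ) * η * (w i * that i) := by
    have := mul_le_mul_of_nonneg_left h2 (le_of_lt hwi)
    nlinarith
  have s2 : (m:ℝ) * η * (w i * that i) ≤ η * γ * (w i' * that i') :=
    by nlinarith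
  have s3 : η * γ * (w i' * that i') ≤ η ^ 2 * γ * (w i' * t i') := by
    have := mul_le_mul_of_nonneg_left h3 (le_of_lt hwi')
    have h4 := mul_le_mul_of_nonneg_left this (le_of_lt (mul_pos hη0 hγ0))
    nlinarith
  have s4 : η ^ 2 * γ * (w i' * t i') ≤ (m:ℝ) * (w i' * t i') := by
    have := mul_pos hwi' hti'
    nlinarith
  have : (m:ℝ) * (w i * t i) ≤ (m:ℝ) * (w i' * t i') := by linarith
  exact le_of_mul_le_mul_left this hm0
end

section
/- (Truthfulness of Algorithm 4, part of Lemma 6.1.) For every number of agents n >= 1 and every fixed dictator i_hat, Algorithm 4 is truthful (strategyproof): for every true location profile v, every agent i, and every misreport x'_i, agent i's connection cost under the facilities computed from the truthful profile v is at most his connection cost under the facilities computed from the profile in which agent i reports x'_i and every other agent j reports v_j. -/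
/-- Algorithm 4 (two-facility game on a line) with a fixed dictator `ihat`:
the first facility is placed at the dictator's report, and the second at
distance `max(2·d_A, d_B)` to the right if `d_A ≤ d_B`, and at distance
`max(d_A, 2·d_B)` to the left otherwise, where `d_A` (resp. `d_B`) is the
largest distance from the dictator's report to a report on its left
(resp. right). -/
noncomputable def alg4 {n : ℕ} (ihat : Fin n) (x : Fin n → ℝ) : ℝ × ℝ :=
  let l1 := x ihat
  let dA := sSup {d : ℝ | ∃ j : Fin n, x j ≤ l1 ∧ d = l1 - x j}
  let dB := sSup {d : ℝ | ∃ j : Fin n, l1 ≤ x j ∧ d = x j - l1}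
  if dA ≤ dB then (l1, l1 + max (2 * dA) dB) else (l1, l1 - max dA (2 * dB))



private lemma alg4_bound1 (a b t : ℝ) (ha : 0 ≤ a) (hb : 0 ≤ b) :
    min |t| |t - (if max a (-t) ≤ max b t then max (2 * max a (-t)) (max b t)
      else -(max (max a (-t)) (2 * max b t)))| ≤ max (max (2 * a) b - t) 0 := by
  rcases le_total t 0 with ht | ht
  · refine (min_le_left _ _).trans ?_
    rw [abs_of_nonpos ht]
    have h1 : (2 * a : ℝ) ≤ max (2 * a) b := le_max_left _ _
    have h2 : max (2 * a) b - t ≤ max (max (2 * a) b - t) 0 := le_max_left _ _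
    linarith
  · rw [max_eq_left (by linarith : -t ≤ a)]
    split_ifs with h
    · rcases le_total t (max (2 * a) b) with h2 | h2
      · have hM2 : max (2 * a) (max b t) ≤ max (2 * a) b :=
          max_le (le_max_left _ _) (max_le (le_max_right _ _) h2)
        have hM1 : t ≤ max (2 * a) (max b t) := (le_max_right b t).trans (le_max_right _ _)
        refine (min_le_right _ _).trans ?_
        rw [abs_of_nonpos (by linarith)]
        have := le_max_left (max (2 * a) b - t) (0 : ℝ)
        linarith
      · have h5 : max b t = t := max_eq_right ((le_max_right (2 * a) b).trans h2)
        have h6 : max (2 * a) (max b t) = t := by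
          rw [h5]; exact max_eq_right ((le_max_left (2 * a) b).trans h2)
        refine (min_le_right _ _).trans ?_
        rw [h6, sub_self, abs_zero]
        exact le_max_right _ _
    · push_neg at h
      have h7 : t < a := (le_max_right b t).trans_lt h
      refine (min_le_left _ _).trans ?_
      rw [abs_of_nonneg ht]
      have h8 : (2 * a : ℝ) ≤ max (2 * a) b := le_max_left _ _
      have h9 := le_max_left (max (2 * a) b - t) (0 : ℝ)
      linarith

private lemma alg4_bound2 (a b t : ℝ) (ha : 0 ≤ a) (hb : 0 ≤ b) :
    min |t| |t - (if max a (-t) ≤ max b t then max (2 * max a (-t)) (max b t)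
      else -(max (max a (-t)) (2 * max b t)))| ≤ max (max a (2 * b) + t) 0 := by
  rcases le_total 0 t with ht | ht
  · refine (min_le_left _ _).trans ?_
    rw [abs_of_nonneg ht]
    have h1 : a ≤ max a (2 * b) := le_max_left _ _
    have h2 := le_max_left (max a (2 * b) + t) (0 : ℝ)
    linarith
  · rw [max_eq_left (by linarith : t ≤ b)]
    split_ifs with h
    · refine (min_le_left _ _).trans ?_
      rw [abs_of_nonpos ht]
      have h1 : -t ≤ b := (le_max_right a (-t)).trans h
      have h2 : (2 * b : ℝ) ≤ max a (2 * b) := le_max_right _ _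
      have h3 := le_max_left (max a (2 * b) + t) (0 : ℝ)
      linarith
    · push_neg at h
      rcases le_total (-t) (max a (2 * b)) with h2 | h2
      · have hN : max (max a (-t)) (2 * b) ≤ max a (2 * b) :=
          max_le (max_le (le_max_left _ _) h2) (le_max_right _ _)
        have hN1 : -t ≤ max (max a (-t)) (2 * b) := (le_max_right a (-t)).trans (le_max_left _ _)
        refine (min_le_right _ _).trans ?_
        rw [sub_neg_eq_add, abs_of_nonneg (by linarith)]
        have := le_max_left (max a (2 * b) + t) (0 : ℝ)
        linarith
      · have h3 : a ≤ -t := (le_max_left a (2 * b)).trans h2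
        have h4 : max a (-t) = -t := max_eq_right h3
        have h5 : max (max a (-t)) (2 * b) = -t := by
          rw [h4]; exact max_eq_left ((le_max_right a (2 * b)).trans h2)
        refine (min_le_right _ _).trans ?_
        rw [h5, sub_neg_eq_add]
        simp

private lemma alg4_core (a b t A B A' B' e e' : ℝ) (ha : 0 ≤ a) (hb : 0 ≤ b)
    (hA : A = max a (-t)) (hB : B = max b t) (hA' : a ≤ A') (hB' : b ≤ B')
    (he : e = if A ≤ B then max (2 * A) B else -(max A (2 * B)))
    (he' : e' = if A' ≤ B' then max (2 * A') B' else -(max A' (2 * B'))) :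
    min |t| |t - e| ≤ min |t| |t - e'| := by
  subst hA hB he he'
  refine le_min (min_le_left _ _) ?_
  by_cases h : A' ≤ B'
  · rw [if_pos h]
    refine (alg4_bound1 a b t ha hb).trans ?_
    refine max_le ?_ (abs_nonneg _)
    have h1 : max (2 * a) b ≤ max (2 * A') B' :=
      max_le ((by linarith : (2 * a : ℝ) ≤ 2 * A').trans (le_max_left _ _))
        (hB'.trans (le_max_right _ _))
    have h2 : -(t - max (2 * A') B') ≤ |t - max (2 * A') B'| := neg_le_abs _
    linarith
  · rw [if_neg h]
    refine (alg4_bound2 a b t ha hb).trans ?_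
    refine max_le ?_ (abs_nonneg _)
    have h1 : max a (2 * b) ≤ max A' (2 * B') :=
      max_le (hA'.trans (le_max_left _ _))
        ((by linarith : (2 * b : ℝ) ≤ 2 * B').trans (le_max_right _ _))
    have h2 : t - -(max A' (2 * B')) ≤ |t - -(max A' (2 * B'))| := le_abs_self _
    linarith

noncomputable def alg4supA {n : ℕ} (ihat : Fin n) (x : Fin n → ℝ) : ℝ :=
  Finset.univ.sup' ⟨ihat, Finset.mem_univ ihat⟩ (fun j => max 0 (x ihat - x j))

noncomputable def alg4supB {n : ℕ} (ihat : Fin n) (x : Fin n → ℝ) : ℝ :=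
  Finset.univ.sup' ⟨ihat, Finset.mem_univ ihat⟩ (fun j => max 0 (x j - x ihat))

private lemma alg4_dA_eq {n : ℕ} (ihat : Fin n) (x : Fin n → ℝ) :
    sSup {d : ℝ | ∃ j : Fin n, x j ≤ x ihat ∧ d = x ihat - x j} = alg4supA ihat x := by
  rw [alg4supA]
  show _ = Finset.univ.sup' (Finset.univ_nonempty_iff.mpr ⟨ihat⟩) _
  rw [Finset.sup'_eq_csSup_image]
  congr 1
  rw [Finset.coe_univ, Set.image_univ]
  ext d
  simp only [Set.mem_setOf_eq, Set.mem_range]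
  constructor
  · rintro ⟨j, hj, rfl⟩
    exact ⟨j, max_eq_right (by linarith)⟩
  · rintro ⟨j, rfl⟩
    rcases le_total (x ihat - x j) 0 with h | h
    · exact ⟨ihat, le_refl _, by rw [max_eq_left h, sub_self]⟩
    · exact ⟨j, by linarith, max_eq_right h⟩

private lemma alg4_dB_eq {n : ℕ} (ihat : Fin n) (x : Fin n → ℝ) :
    sSup {d : ℝ | ∃ j : Fin n, x ihat ≤ x j ∧ d = x j - x ihat} = alg4supB ihat x := by
  rw [alg4supB]
  show _ = Finset.univ.sup' (Finset.univ_nonempty_iff.mpr ⟨ihat⟩) _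
  rw [Finset.sup'_eq_csSup_image]
  congr 1
  rw [Finset.coe_univ, Set.image_univ]
  ext d
  simp only [Set.mem_setOf_eq, Set.mem_range]
  constructor
  · rintro ⟨j, hj, rfl⟩
    exact ⟨j, max_eq_right (by linarith)⟩
  · rintro ⟨j, rfl⟩
    rcases le_total (x j - x ihat) 0 with h | h
    · exact ⟨ihat, le_refl _, by rw [max_eq_left h, sub_self]⟩
    · exact ⟨j, by linarith, max_eq_right h⟩

private lemma alg4_eq {n : ℕ} (ihat : Fin n) (x : Fin n → ℝ) :
    alg4 ihat x = (x ihat, x ihat +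
      (if alg4supA ihat x ≤ alg4supB ihat x
        then max (2 * alg4supA ihat x) (alg4supB ihat x)
        else -(max (alg4supA ihat x) (2 * alg4supB ihat x)))) := by
  simp only [alg4]
  rw [alg4_dA_eq, alg4_dB_eq]
  split_ifs with h
  · rfl
  · rw [Prod.mk.injEq]
    exact ⟨rfl, by ring⟩

private lemma alg4_max_zero (u a : ℝ) (ha : 0 ≤ a) : max (max 0 u) a = max a u := by
  rcases le_total u 0 with h | h
  · rw [max_eq_left h, max_eq_right ha, max_eq_left (h.trans ha)]
  · rw [max_eq_right h]
    exact max_comm u a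

private lemma alg4_sup_decomp {n : ℕ} {i ihat : Fin n} (hi : ihat ≠ i) (f : Fin n → ℝ) :
    (Finset.univ.sup' ⟨ihat, Finset.mem_univ ihat⟩ f) =
      max (f i) ((Finset.univ.erase i).sup'
        ⟨ihat, Finset.mem_erase.mpr ⟨hi, Finset.mem_univ ihat⟩⟩ f) := by
  apply le_antisymm
  · apply Finset.sup'_le
    intro j hj
    by_cases hji : j = i
    · subst hji; exact le_max_left _ _
    · exact le_trans (Finset.le_sup' f (Finset.mem_erase.mpr ⟨hji, Finset.mem_univ j⟩))
        (le_max_right _ _)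
  · apply max_le
    · exact Finset.le_sup' f (Finset.mem_univ i)
    · exact Finset.sup'_le _ _ fun j _ => Finset.le_sup' f (Finset.mem_univ j)


/-- Truthfulness of Algorithm 4 (part of Lemma 6.1): for any dictator
`ihat`, true profile `v`, agent `i` and misreport `x'`, agent `i`'s
connection cost under the facilities computed from the truthful profile is
at most his connection cost under the facilities computed from the profile
where he misreports. -/
theorem alg4_truthful (n : ℕ) (hn : 1 ≤ n) (ihat : Fin n)
    (v : Fin n → ℝ) (i : Fin n) (x' : ℝ) :
    min |v i - (alg4 ihat v).1| |v i - (alg4 ihat v).2| ≤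
    min |v i - (alg4 ihat (Function.update v i x')).1|
        |v i - (alg4 ihat (Function.update v i x')).2| := by
  classical
  by_cases hi : i = ihat
  · subst hi
    have h1 : (alg4 i v).1 = v i := by rw [alg4_eq]
    rw [h1, sub_self, abs_zero]
    exact (min_le_left _ _).trans (le_min (abs_nonneg _) (abs_nonneg _))
  · set w := Function.update v i x' with hw
    have hwc : w ihat = v ihat := by
      rw [hw]; exact Function.update_of_ne (Ne.symm hi) _ _
    have hne : (Finset.univ.erase i).Nonempty :=
      ⟨ihat, Finset.mem_erase.mpr ⟨Ne.symm hi, Finset.mem_univ ihat⟩⟩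
    have hadef : ∃ a : ℝ, a = (Finset.univ.erase i).sup' hne (fun j => max 0 (v ihat - v j)) :=
      ⟨_, rfl⟩
    obtain ⟨a, hadef⟩ := hadef
    obtain ⟨b, hbdef⟩ : ∃ b : ℝ, b = (Finset.univ.erase i).sup' hne
        (fun j => max 0 (v j - v ihat)) := ⟨_, rfl⟩
    have ha : 0 ≤ a := by
      have h1 := Finset.le_sup' (fun j => max 0 (v ihat - v j))
        (Finset.mem_erase.mpr ⟨Ne.symm hi, Finset.mem_univ ihat⟩)
      have h2 : (0 : ℝ) ≤ max 0 (v ihat - v ihat) := le_max_left _ _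
      rw [hadef]; exact h2.trans h1
    have hb : 0 ≤ b := by
      have h1 := Finset.le_sup' (fun j => max 0 (v j - v ihat))
        (Finset.mem_erase.mpr ⟨Ne.symm hi, Finset.mem_univ ihat⟩)
      have h2 : (0 : ℝ) ≤ max 0 (v ihat - v ihat) := le_max_left _ _
      rw [hbdef]; exact h2.trans h1
    have hAv : alg4supA ihat v = max a (-(v i - v ihat)) := by
      rw [alg4supA, alg4_sup_decomp (Ne.symm hi), neg_sub, ← hadef]
      exact alg4_max_zero _ a ha
    have hBv : alg4supB ihat v = max b (v i - v ihat) := by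
      rw [alg4supB, alg4_sup_decomp (Ne.symm hi), ← hbdef]
      exact alg4_max_zero _ b hb
    have heqA : (Finset.univ.erase i).sup' hne (fun j => max 0 (w ihat - w j)) = a := by
      rw [hadef]
      refine Finset.sup'_congr hne rfl fun j hj => ?_
      rw [hwc, hw, Function.update_of_ne (Finset.ne_of_mem_erase hj)]
    have heqB : (Finset.univ.erase i).sup' hne (fun j => max 0 (w j - w ihat)) = b := by
      rw [hbdef]
      refine Finset.sup'_congr hne rfl fun j hj => ?_
      rw [hwc, hw, Function.update_of_ne (Finset.ne_of_mem_erase hj)]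
    have hAw : a ≤ alg4supA ihat w := by
      rw [alg4supA, alg4_sup_decomp (Ne.symm hi), heqA]
      exact le_max_right _ _
    have hBw : b ≤ alg4supB ihat w := by
      rw [alg4supB, alg4_sup_decomp (Ne.symm hi), heqB]
      exact le_max_right _ _
    rw [alg4_eq ihat v, alg4_eq ihat w]
    dsimp only
    rw [hwc]
    set E1 := (if alg4supA ihat v ≤ alg4supB ihat v
      then max (2 * alg4supA ihat v) (alg4supB ihat v)
      else -(max (alg4supA ihat v) (2 * alg4supB ihat v))) with hE1
    set E2 := (if alg4supA ihat w ≤ alg4supB ihat w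
      then max (2 * alg4supA ihat w) (alg4supB ihat w)
      else -(max (alg4supA ihat w) (2 * alg4supB ihat w))) with hE2
    have r1 : v i - (v ihat + E1) = v i - v ihat - E1 := by ring
    have r2 : v i - (v ihat + E2) = v i - v ihat - E2 := by ring
    rw [r1, r2]
    exact alg4_core a b (v i - v ihat) (alg4supA ihat v) (alg4supB ihat v)
      (alg4supA ihat w) (alg4supB ihat w) E1 E2 ha hb hAv hBv hAw hBw hE1 hE2
end

section
/- (Robustness of Algorithm 4, part of Lemma 6.1.) For every number of agents n >= 2, every location profile v, and every choice of dictator i_hat, the social cost of the facility pair output by Algorithm 4 on the truthful report profile x = v is at most (2n - 1) * OPT(v). -/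
lemma alg4_core_s16 (n : ℕ) (v : Fin n → ℝ) (ihat p q : Fin n) (y1 y2 : ℝ) (hy : y1 ≤ y2)
    (dA dB : ℝ) (hdA : 0 ≤ dA) (hAB : dA ≤ dB)
    (hp : v p = v ihat - dA) (hq : v q = v ihat + dB)
    (hlb : ∀ j, v ihat - dA ≤ v j) (hub : ∀ j, v j ≤ v ihat + dB) :
    (∑ i : Fin n, min |v i - v ihat| |v i - (v ihat + max (2 * dA) dB)|) ≤
      (2 * (n : ℝ) - 1) * ∑ i : Fin n, min |v i - y1| |v i - y2| := by
  classical
  set c : ℝ → ℝ := fun t => min |t - y1| |t - y2| with hcdef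
  show (∑ i : Fin n, min |v i - v ihat| |v i - (v ihat + max (2 * dA) dB)|) ≤
      (2 * (n : ℝ) - 1) * ∑ i : Fin n, c (v i)
  set C : ℝ := ∑ i : Fin n, c (v i) with hCdef
  have hc0 : ∀ t, 0 ≤ c t := fun t => le_min (abs_nonneg _) (abs_nonneg _)
  have hC0 : 0 ≤ C := Finset.sum_nonneg fun i _ => hc0 _
  have hcC : ∀ i : Fin n, c (v i) ≤ C := fun i =>
    Finset.single_le_sum (fun j _ => hc0 (v j)) (Finset.mem_univ i)
  have hpair : ∀ i j : Fin n, i ≠ j → c (v i) + c (v j) ≤ C := by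
    intro i j hij
    have h : ∑ k ∈ ({i, j} : Finset (Fin n)), c (v k) ≤ C := by
      apply Finset.sum_le_sum_of_subset_of_nonneg (Finset.subset_univ _)
      intro k _ _; exact hc0 _
    rwa [Finset.sum_pair hij] at h
  have hleft : ∀ s t : ℝ, 2 * s ≤ y1 + y2 → 2 * t ≤ y1 + y2 → |s - t| ≤ c s + c t := by
    intro s t hs ht
    have e1 : c s = |s - y1| := by
      apply min_eq_left
      rcases abs_cases (s - y1) with ⟨h, _⟩ | ⟨h, _⟩ <;>
        rcases abs_cases (s - y2) with ⟨h', _⟩ | ⟨h', _⟩ <;> linarith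
    have e2 : c t = |t - y1| := by
      apply min_eq_left
      rcases abs_cases (t - y1) with ⟨h, _⟩ | ⟨h, _⟩ <;>
        rcases abs_cases (t - y2) with ⟨h', _⟩ | ⟨h', _⟩ <;> linarith
    rw [e1, e2]
    calc |s - t| ≤ |s - y1| + |y1 - t| := abs_sub_le s y1 t
      _ = |s - y1| + |t - y1| := by rw [abs_sub_comm y1 t]
  have hright : ∀ s t : ℝ, y1 + y2 ≤ 2 * s → y1 + y2 ≤ 2 * t → |s - t| ≤ c s + c t := by
    intro s t hs ht
    have e1 : c s = |s - y2| := by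
      apply min_eq_right
      rcases abs_cases (s - y1) with ⟨h, _⟩ | ⟨h, _⟩ <;>
        rcases abs_cases (s - y2) with ⟨h', _⟩ | ⟨h', _⟩ <;> linarith
    have e2 : c t = |t - y2| := by
      apply min_eq_right
      rcases abs_cases (t - y1) with ⟨h, _⟩ | ⟨h, _⟩ <;>
        rcases abs_cases (t - y2) with ⟨h', _⟩ | ⟨h', _⟩ <;> linarith
    rw [e1, e2]
    calc |s - t| ≤ |s - y2| + |y2 - t| := abs_sub_le s y2 t
      _ = |s - y2| + |t - y2| := by rw [abs_sub_comm y2 t]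
  have hdAC : dA ≤ C := by
    rcases le_total (2 * v ihat) (y1 + y2) with hm | hm
    · by_cases hpi : p = ihat
      · have h0 : dA = 0 := by
          have h := hp; rw [hpi] at h; linarith
        linarith
      · have h1 : |v p - v ihat| ≤ c (v p) + c (v ihat) :=
          hleft _ _ (by rw [hp]; linarith) hm
        have h2 : |v p - v ihat| = dA := by
          rw [hp, abs_of_nonpos (by linarith)]; ring
        have h3 := hpair p ihat hpi
        linarith
    · by_cases hqi : q = ihat
      · have h0 : dB = 0 := by
          have h := hq; rw [hqi] at h; linarith
        linarith
      · have h1 : |v q - v ihat| ≤ c (v q) + c (v ihat) :=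
          hright _ _ (by rw [hq]; linarith) hm
        have h2 : |v q - v ihat| = dB := by
          rw [hq, abs_of_nonneg (by linarith)]; ring
        have h3 := hpair q ihat hqi
        linarith
  set m : ℝ := max (2 * dA) dB with hmdef
  have hm1 : dB ≤ m := le_max_right _ _
  have hm2 : m ≤ dA + dB := max_le (by linarith) (by linarith)
  have key : ∀ i : Fin n, i ≠ ihat →
      min |v i - v ihat| |v i - (v ihat + m)| ≤ 2 * C := by
    intro i hi
    rcases le_total (2 * v ihat) (y1 + y2) with hmid | hmid
    · rcases le_total (2 * v i) (y1 + y2) with hvi | hvi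
      · have h1 := hleft (v i) (v ihat) hvi hmid
        have h2 := hpair i ihat hi
        calc min |v i - v ihat| |v i - (v ihat + m)| ≤ |v i - v ihat| := min_le_left _ _
          _ ≤ 2 * C := by linarith
      · by_cases hiq : i = q
        · have h2 : |v i - (v ihat + m)| = m - dB := by
            rw [hiq, hq, abs_of_nonpos (by linarith)]; ring
        
          calc min |v i - v ihat| |v i - (v ihat + m)| ≤ |v i - (v ihat + m)| :=
                min_le_right _ _
            _ = m - dB := h2
            _ ≤ 2 * C := by linarith
        · have hviq : v i ≤ v q := by rw [hq]; exact hub i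
          have h1 := hright (v i) (v q) hvi (by linarith)
          have h2 : |v q - (v ihat + m)| = m - dB := by
            rw [hq, abs_of_nonpos (by linarith)]; ring
          have h3 := hpair i q hiq
          calc min |v i - v ihat| |v i - (v ihat + m)| ≤ |v i - (v ihat + m)| :=
                min_le_right _ _
            _ ≤ |v i - v q| + |v q - (v ihat + m)| := abs_sub_le _ _ _
            _ ≤ 2 * C := by linarith
    · rcases le_total (y1 + y2) (2 * v i) with hvi | hvi
      · have h1 := hright (v i) (v ihat) hvi hmid
        have h2 := hpair i ihat hi
        calc min |v i - v ihat| |v i - (v ihat + m)| ≤ |v i - v ihat| := min_le_left _ _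
          _ ≤ 2 * C := by linarith
      · have h1 : |v i - v ihat| ≤ dA := by
          have h := hlb i
          rw [abs_of_nonpos (by linarith)]; linarith
        calc min |v i - v ihat| |v i - (v ihat + m)| ≤ |v i - v ihat| := min_le_left _ _
          _ ≤ 2 * C := by linarith
  -- sum it up
  have hsplit : (∑ i : Fin n, min |v i - v ihat| |v i - (v ihat + m)|) =
      (∑ i ∈ Finset.univ.erase ihat, min |v i - v ihat| |v i - (v ihat + m)|) +
        min |v ihat - v ihat| |v ihat - (v ihat + m)| :=
    (Finset.sum_erase_add _ _ (Finset.mem_univ ihat)).symm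
  have h1 : min |v ihat - v ihat| |v ihat - (v ihat + m)| ≤ 0 := by
    simpa using min_le_left |v ihat - v ihat| |v ihat - (v ihat + m)|
  have h2 : (∑ i ∈ Finset.univ.erase ihat, min |v i - v ihat| |v i - (v ihat + m)|) ≤
      (Finset.univ.erase ihat).card • (2 * C) :=
    Finset.sum_le_card_nsmul _ _ _ (fun i hi => key i (Finset.ne_of_mem_erase hi))
  have hcard : (Finset.univ.erase ihat).card = n - 1 := by
    simp [Finset.card_erase_of_mem]
  have hn1 : 1 ≤ n := Nat.one_le_iff_ne_zero.mpr (by rintro rfl; exact absurd ihat.2 (by simp))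
  have hcast : ((n - 1 : ℕ) : ℝ) = (n : ℝ) - 1 := by
    rw [Nat.cast_sub hn1]; norm_num
  have h3 : (Finset.univ.erase ihat).card • (2 * C) = ((n : ℝ) - 1) * (2 * C) := by
    rw [hcard, nsmul_eq_mul, hcast]
  have h4 : ((n : ℝ) - 1) * (2 * C) ≤ (2 * (n : ℝ) - 1) * C := by
    nlinarith [hC0]
  calc (∑ i : Fin n, min |v i - v ihat| |v i - (v ihat + m)|)
      = _ := hsplit
    _ ≤ (Finset.univ.erase ihat).card • (2 * C) + 0 := add_le_add h2 h1
    _ = ((n : ℝ) - 1) * (2 * C) := by rw [h3, add_zero]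
    _ ≤ (2 * (n : ℝ) - 1) * C := h4

/-- Robustness of Algorithm 4 (part of Lemma 6.1): for every `n ≥ 2`,
every location profile `v` and every dictator `ihat`, the social cost of
the output of Algorithm 4 on the truthful profile is at most
`(2n - 1) · OPT(v)`. -/
theorem alg4_robust (n : ℕ) (hn : 2 ≤ n) (ihat : Fin n) (v : Fin n → ℝ) :
    (∑ i : Fin n, min |v i - (alg4 ihat v).1| |v i - (alg4 ihat v).2|) ≤
    (2 * (n : ℝ) - 1) *
      sInf {c : ℝ | ∃ y1 y2 : ℝ,
        c = ∑ i : Fin n, min |v i - y1| |v i - y2|} := by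
  classical
  set dA := sSup {d : ℝ | ∃ j : Fin n, v j ≤ v ihat ∧ d = v ihat - v j} with hdAdef
  set dB := sSup {d : ℝ | ∃ j : Fin n, v ihat ≤ v j ∧ d = v j - v ihat} with hdBdef
  have halg : alg4 ihat v = if dA ≤ dB then (v ihat, v ihat + max (2 * dA) dB)
      else (v ihat, v ihat - max dA (2 * dB)) := rfl
  -- properties of dA
  have hfinA : ({d : ℝ | ∃ j : Fin n, v j ≤ v ihat ∧ d = v ihat - v j}).Finite := by
    apply Set.Finite.subset (Set.finite_range fun j : Fin n => v ihat - v j)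
    rintro d ⟨j, _, rfl⟩; exact ⟨j, rfl⟩
  have hneA : ({d : ℝ | ∃ j : Fin n, v j ≤ v ihat ∧ d = v ihat - v j}).Nonempty :=
    ⟨0, ihat, le_rfl, by ring⟩
  have hAmem : dA ∈ {d : ℝ | ∃ j : Fin n, v j ≤ v ihat ∧ d = v ihat - v j} :=
    hneA.csSup_mem hfinA
  obtain ⟨pA, hpA1, hpA2⟩ := hAmem
  have hA0 : 0 ≤ dA := le_csSup hfinA.bddAbove ⟨ihat, le_rfl, by ring⟩
  have hAle : ∀ j, v j ≤ v ihat → v ihat - v j ≤ dA := fun j hj =>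
    le_csSup hfinA.bddAbove ⟨j, hj, rfl⟩
  have hlbA : ∀ j, v ihat - dA ≤ v j := by
    intro j
    rcases le_total (v j) (v ihat) with h | h
    · have := hAle j h; linarith
    · linarith
  -- properties of dB
  have hfinB : ({d : ℝ | ∃ j : Fin n, v ihat ≤ v j ∧ d = v j - v ihat}).Finite := by
    apply Set.Finite.subset (Set.finite_range fun j : Fin n => v j - v ihat)
    rintro d ⟨j, _, rfl⟩; exact ⟨j, rfl⟩
  have hneB : ({d : ℝ | ∃ j : Fin n, v ihat ≤ v j ∧ d = v j - v ihat}).Nonempty :=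
    ⟨0, ihat, le_rfl, by ring⟩
  have hBmem : dB ∈ {d : ℝ | ∃ j : Fin n, v ihat ≤ v j ∧ d = v j - v ihat} :=
    hneB.csSup_mem hfinB
  obtain ⟨qB, hqB1, hqB2⟩ := hBmem
  have hB0 : 0 ≤ dB := le_csSup hfinB.bddAbove ⟨ihat, le_rfl, by ring⟩
  have hBle : ∀ j, v ihat ≤ v j → v j - v ihat ≤ dB := fun j hj =>
    le_csSup hfinB.bddAbove ⟨j, hj, rfl⟩
  have hubB : ∀ j, v j ≤ v ihat + dB := by
    intro j
    rcases le_total (v ihat) (v j) with h | h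
    · have := hBle j h; linarith
    · linarith
  -- key: bound against any pair of facilities
  have key : ∀ y1 y2 : ℝ,
      (∑ i : Fin n, min |v i - (alg4 ihat v).1| |v i - (alg4 ihat v).2|) ≤
        (2 * (n : ℝ) - 1) * ∑ i : Fin n, min |v i - y1| |v i - y2| := by
    intro y1 y2
    set z1 := min y1 y2 with hz1
    set z2 := max y1 y2 with hz2
    have hz : ∀ t : ℝ, min |t - y1| |t - y2| = min |t - z1| |t - z2| := by
      intro t
      rcases le_total y1 y2 with h | h
      · rw [hz1, hz2, min_eq_left h, max_eq_right h]
      · rw [hz1, hz2, min_eq_right h, max_eq_left h, min_comm]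
    have hzz : z1 ≤ z2 := min_le_max
    rw [show (∑ i : Fin n, min |v i - y1| |v i - y2|) =
        ∑ i : Fin n, min |v i - z1| |v i - z2| from
      Finset.sum_congr rfl fun i _ => hz (v i)]
    by_cases hcase : dA ≤ dB
    · rw [halg, if_pos hcase]
      exact alg4_core_s16 n v ihat pA qB z1 z2 hzz dA dB hA0 hcase (by linarith)
        (by linarith) hlbA hubB
    · have hBA : dB ≤ dA := le_of_not_ge hcase
      have hcore := alg4_core_s16 n (fun i => -v i) ihat qB pA (-z2) (-z1) (by linarith)
        dB dA hB0 hBA (by linarith) (by linarith)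
        (fun j => by have := hubB j; simp; linarith)
        (fun j => by have := hlbA j; simp; linarith)
      rw [halg, if_neg hcase]
      simp only
      have eL : ∀ i : Fin n,
          min |(fun i => -v i) i - (fun i => -v i) ihat|
            |(fun i => -v i) i - ((fun i => -v i) ihat + max (2 * dB) dA)| =
          min |v i - v ihat| |v i - (v ihat - max dA (2 * dB))| := by
        intro i
        simp only
        rw [max_comm,
          show -v i - (-v ihat + max dA (2 * dB)) = -(v i - (v ihat - max dA (2 * dB))) by ring,
          show -v i - -v ihat = -(v i - v ihat) by ring, abs_neg, abs_neg]
      have eR : ∀ i : Fin n,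
          min |(fun i => -v i) i - -z2| |(fun i => -v i) i - -z1| =
          min |v i - z1| |v i - z2| := by
        intro i
        simp only
        rw [show -v i - -z2 = -(v i - z2) by ring, show -v i - -z1 = -(v i - z1) by ring,
          abs_neg, abs_neg, min_comm]
      rw [Finset.sum_congr rfl fun i _ => eL i, Finset.sum_congr rfl fun i _ => eR i] at hcore
      exact hcore
  -- conclude with the infimum
  set T := {c : ℝ | ∃ y1 y2 : ℝ, c = ∑ i : Fin n, min |v i - y1| |v i - y2|} with hT
  have hTne : T.Nonempty := ⟨_, 0, 0, rfl⟩
  have hpos : (0 : ℝ) < 2 * (n : ℝ) - 1 := by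
    have : (2 : ℝ) ≤ (n : ℝ) := by exact_mod_cast hn
    linarith
  set A := ∑ i : Fin n, min |v i - (alg4 ihat v).1| |v i - (alg4 ihat v).2| with hA
  have hInf : A / (2 * (n : ℝ) - 1) ≤ sInf T := by
    apply le_csInf hTne
    rintro b ⟨y1, y2, rfl⟩
    rw [div_le_iff₀ hpos]
    calc A ≤ (2 * (n : ℝ) - 1) * ∑ i : Fin n, min |v i - y1| |v i - y2| := key y1 y2
      _ = (∑ i : Fin n, min |v i - y1| |v i - y2|) * (2 * (n : ℝ) - 1) := mul_comm _ _
  calc A = (2 * (n : ℝ) - 1) * (A / (2 * (n : ℝ) - 1)) := by field_simp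
    _ ≤ (2 * (n : ℝ) - 1) * sInf T := by
        exact mul_le_mul_of_nonneg_left hInf (le_of_lt hpos)
end

section
/- (Lemma 6.2: consistency of Algorithm 4 with error-free predictions.) Let v be a location profile of n agents, and suppose there exists an optimal facility pair (l_hat_1, l_hat_2), a set S_1 of agents with |S_1| >= n/2, and an agent i_hat with v_{i_hat} = l_hat_1, such that OPT(v) equals the sum over i in S_1 of |v_i - l_hat_1| plus the sum over i not in S_1 of |v_i - l_hat_2|. Then the facility pair output by Algorithm 4 with dictator i_hat on the truthful report profile x = v has social cost at most (1 + n/2) * OPT(v). -/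
/-- Key per-agent bound (normalized so that the first facility is at 0,
second facility on the right). -/
lemma alg4_key (p dA dB t O : ℝ) (hp1 : -dA ≤ p) (hp2 : p ≤ dB)
    (hA : 0 ≤ dA) (hAB : dA ≤ dB)
    (hO1 : min dA |-dA - t| ≤ O) (hO2 : min dB |dB - t| ≤ O) :
    min |p| |p - max (2 * dA) dB| ≤ |p - t| + O := by
  have habs : 0 ≤ |p - t| := abs_nonneg _
  have hOpos : 0 ≤ O := le_trans (le_min hA (abs_nonneg _)) hO1
  rcases le_or_gt t 0 with ht | ht
  · -- second optimal facility on the left: O ≥ dB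
    have h1 : |dB - t| = dB - t := abs_of_nonneg (by linarith)
    rw [h1, min_eq_left (by linarith)] at hO2
    have hpb : |p| ≤ dB := abs_le.mpr ⟨by linarith, hp2⟩
    have := min_le_left |p| |p - max (2 * dA) dB|
    linarith
  · -- t > 0 : O ≥ dA
    have h1 : |-dA - t| = dA + t := by
      rw [abs_of_nonpos (by linarith)]; ring
    rw [h1, min_eq_left (by linarith)] at hO1
    rcases le_or_gt p 0 with hp | hp
    · have hpa : |p| = -p := abs_of_nonpos hp
      have := min_le_left |p| |p - max (2 * dA) dB|
      linarith
    · rcases le_or_gt dB (2 * dA) with hd | hd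
      · rw [max_eq_left hd]
        rcases le_or_gt p dA with hpa | hpa
        · have h2 : |p| = p := abs_of_nonneg hp.le
          have := min_le_left |p| |p - 2 * dA|
          linarith
        · have h2 : |p - 2 * dA| = 2 * dA - p := by rw [abs_of_nonpos (by linarith : p - 2 * dA ≤ 0)]; ring
          have := min_le_right |p| |p - 2 * dA|
          linarith
      · rw [max_eq_right hd.le]
        have h2 : |p - dB| = dB - p := by rw [abs_of_nonpos (by linarith : p - dB ≤ 0)]; ring
        have hmr := min_le_right |p| |p - dB|
        rcases le_or_gt dB t with h1' | h1'
        · have h3 : |p - t| = t - p := by rw [abs_of_nonpos (by linarith : p - t ≤ 0)]; ring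
          linarith
        · have h4 : dB - t ≤ O := by
            have h5 : |dB - t| = dB - t := abs_of_nonneg (by linarith)
            rw [h5, min_eq_right (by linarith)] at hO2
            exact hO2
          rcases le_or_gt p t with h5 | h5
          · have h3 : |p - t| = t - p := by rw [abs_of_nonpos (by linarith : p - t ≤ 0)]; ring
            linarith
          · linarith

/-- Assembling the per-agent bounds into the consistency bound. -/
lemma alg4_assemble {n : ℕ} (v : Fin n → ℝ) (l1 lh2 l2 : ℝ) (S1 : Finset (Fin n))
    (hS1 : (n : ℝ) / 2 ≤ S1.card)
    (hb : ∀ i : Fin n, min |v i - l1| |v i - l2| ≤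
      |v i - lh2| + (∑ i ∈ S1, |v i - l1| + ∑ i ∈ S1ᶜ, |v i - lh2|)) :
    ∑ i : Fin n, min |v i - l1| |v i - l2| ≤
      (1 + (n : ℝ) / 2) * (∑ i ∈ S1, |v i - l1| + ∑ i ∈ S1ᶜ, |v i - lh2|) := by
  set OO := ∑ i ∈ S1, |v i - l1| + ∑ i ∈ S1ᶜ, |v i - lh2| with hOOdef
  have hOO : 0 ≤ OO :=
    add_nonneg (Finset.sum_nonneg fun i _ => abs_nonneg _)
      (Finset.sum_nonneg fun i _ => abs_nonneg _)
  have hcardle : S1.card ≤ n := by simpa using S1.card_le_univ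
  have hcard : (S1ᶜ.card : ℝ) ≤ (n : ℝ) / 2 := by
    have h2 : (S1ᶜ.card : ℝ) = (n : ℝ) - S1.card := by
      rw [Finset.card_compl, Fintype.card_fin, Nat.cast_sub hcardle]
    linarith
  calc ∑ i : Fin n, min |v i - l1| |v i - l2|
      = ∑ i ∈ S1, min |v i - l1| |v i - l2|
        + ∑ i ∈ S1ᶜ, min |v i - l1| |v i - l2| :=
        (Finset.sum_add_sum_compl S1 _).symm
    _ ≤ ∑ i ∈ S1, |v i - l1| + ∑ i ∈ S1ᶜ, (|v i - lh2| + OO) :=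
        add_le_add (Finset.sum_le_sum fun i _ => min_le_left _ _)
          (Finset.sum_le_sum fun i _ => hb i)
    _ = ∑ i ∈ S1, |v i - l1| + (∑ i ∈ S1ᶜ, |v i - lh2| + S1ᶜ.card * OO) := by
        rw [Finset.sum_add_distrib, Finset.sum_const, nsmul_eq_mul]
    _ = OO + (S1ᶜ.card : ℝ) * OO := by rw [hOOdef]; ring
    _ ≤ (1 + (n : ℝ) / 2) * OO := by
        nlinarith [mul_le_mul_of_nonneg_right hcard hOO]

/-- Lemma 6.2: consistency of Algorithm 4 with error-free predictions.  If
`(l̂₁, l̂₂)` is an optimal pair of facilities, agents in `S₁` (with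
`|S₁| ≥ n/2`) are served by `l̂₁` and the rest by `l̂₂`, and the dictator
`ihat` is located at `l̂₁`, then the output of Algorithm 4 on the truthful
profile has social cost at most `(1 + n/2) · OPT(v)`. -/
theorem alg4_consistent (n : ℕ) (v : Fin n → ℝ) (lh1 lh2 : ℝ)
    (S1 : Finset (Fin n)) (hS1 : (n : ℝ) / 2 ≤ S1.card)
    (ihat : Fin n) (hihat : v ihat = lh1)
    (hopt : sInf {c : ℝ | ∃ y1 y2 : ℝ,
        c = ∑ i : Fin n, min |v i - y1| |v i - y2|} =
      ∑ i ∈ S1, |v i - lh1| + ∑ i ∈ S1ᶜ, |v i - lh2|) :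
    (∑ i : Fin n, min |v i - (alg4 ihat v).1| |v i - (alg4 ihat v).2|) ≤
    (1 + (n : ℝ) / 2) *
      sInf {c : ℝ | ∃ y1 y2 : ℝ,
        c = ∑ i : Fin n, min |v i - y1| |v i - y2|} := by
  subst hihat
  rw [hopt]
  set OO := ∑ i ∈ S1, |v i - v ihat| + ∑ i ∈ S1ᶜ, |v i - lh2| with hOOdef
  -- basic facts about dA and dB
  set SA : Set ℝ := {d : ℝ | ∃ j : Fin n, v j ≤ v ihat ∧ d = v ihat - v j} with hSAdef
  set SB : Set ℝ := {d : ℝ | ∃ j : Fin n, v ihat ≤ v j ∧ d = v j - v ihat} with hSBdef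
  set dA := sSup SA with hdAdef
  set dB := sSup SB with hdBdef
  have hfinA : SA.Finite := by
    apply (Set.finite_range (fun j : Fin n => v ihat - v j)).subset
    rintro d ⟨j, _, hd⟩; exact ⟨j, hd.symm⟩
  have hfinB : SB.Finite := by
    apply (Set.finite_range (fun j : Fin n => v j - v ihat)).subset
    rintro d ⟨j, _, hd⟩; exact ⟨j, hd.symm⟩
  have hneA : SA.Nonempty := ⟨0, ihat, le_refl _, by ring⟩
  have hneB : SB.Nonempty := ⟨0, ihat, le_refl _, by ring⟩
  have hbddA : BddAbove SA := hfinA.bddAbove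
  have hbddB : BddAbove SB := hfinB.bddAbove
  have hdA0 : 0 ≤ dA := le_csSup hbddA ⟨ihat, le_refl _, by ring⟩
  have hdB0 : 0 ≤ dB := le_csSup hbddB ⟨ihat, le_refl _, by ring⟩
  obtain ⟨a, ha1, ha2⟩ : ∃ j : Fin n, v j ≤ v ihat ∧ dA = v ihat - v j :=
    hneA.csSup_mem hfinA
  obtain ⟨b, hb1, hb2⟩ : ∃ j : Fin n, v ihat ≤ v j ∧ dB = v j - v ihat :=
    hneB.csSup_mem hfinB
  have hlow : ∀ j : Fin n, v ihat - dA ≤ v j := by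
    intro j
    rcases le_or_gt (v j) (v ihat) with h | h
    · have : v ihat - v j ≤ dA := le_csSup hbddA ⟨j, h, rfl⟩
      linarith
    · linarith
  have hhigh : ∀ j : Fin n, v j ≤ v ihat + dB := by
    intro j
    rcases le_or_gt (v ihat) (v j) with h | h
    · have : v j - v ihat ≤ dB := le_csSup hbddB ⟨j, h, rfl⟩
      linarith
    · linarith
  -- each agent's optimal cost lower-bounds OPT
  have hterm : ∀ j : Fin n, min |v j - v ihat| |v j - lh2| ≤ OO := by
    intro j
    by_cases hj : j ∈ S1
    · have h1 : |v j - v ihat| ≤ ∑ i ∈ S1, |v i - v ihat| :=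
        Finset.single_le_sum (f := fun i => |v i - v ihat|) (fun i _ => abs_nonneg _) hj
      have h2 : (0:ℝ) ≤ ∑ i ∈ S1ᶜ, |v i - lh2| :=
        Finset.sum_nonneg fun i _ => abs_nonneg _
      have := min_le_left |v j - v ihat| |v j - lh2|
      rw [hOOdef]; linarith
    · have h1 : |v j - lh2| ≤ ∑ i ∈ S1ᶜ, |v i - lh2| :=
        Finset.single_le_sum (f := fun i => |v i - lh2|) (fun i _ => abs_nonneg _) (Finset.mem_compl.mpr hj)
      have h2 : (0:ℝ) ≤ ∑ i ∈ S1, |v i - v ihat| :=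
        Finset.sum_nonneg fun i _ => abs_nonneg _
      have := min_le_right |v j - v ihat| |v j - lh2|
      rw [hOOdef]; linarith
  have halg : alg4 ihat v =
      if dA ≤ dB then (v ihat, v ihat + max (2 * dA) dB)
      else (v ihat, v ihat - max dA (2 * dB)) := rfl
  rcases le_or_gt dA dB with h | h
  · have e1 : (alg4 ihat v).1 = v ihat := by rw [halg, if_pos h]
    have e2 : (alg4 ihat v).2 = v ihat + max (2 * dA) dB := by rw [halg, if_pos h]
    rw [e1, e2]
    apply alg4_assemble v (v ihat) lh2 _ S1 hS1
    intro i
    have hO1 : min dA |-dA - (lh2 - v ihat)| ≤ OO := by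
      have hta := hterm a
      rw [show v a - v ihat = -dA from by linarith, abs_neg, abs_of_nonneg hdA0,
        show v a - lh2 = -dA - (lh2 - v ihat) from by linarith] at hta
      exact hta
    have hO2 : min dB |dB - (lh2 - v ihat)| ≤ OO := by
      have htb := hterm b
      rw [show v b - v ihat = dB from by linarith, abs_of_nonneg hdB0,
        show v b - lh2 = dB - (lh2 - v ihat) from by linarith] at htb
      exact htb
    have hk := alg4_key (v i - v ihat) dA dB (lh2 - v ihat) OO
      (by linarith [hlow i]) (by linarith [hhigh i]) hdA0 h hO1 hO2
    rw [show v i - v ihat - max (2 * dA) dB = v i - (v ihat + max (2 * dA) dB)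
        from by ring,
      show v i - v ihat - (lh2 - v ihat) = v i - lh2 from by ring] at hk
    exact hk
  · have e1 : (alg4 ihat v).1 = v ihat := by rw [halg, if_neg (not_le.mpr h)]
    have e2 : (alg4 ihat v).2 = v ihat - max dA (2 * dB) := by
      rw [halg, if_neg (not_le.mpr h)]
    rw [e1, e2]
    apply alg4_assemble v (v ihat) lh2 _ S1 hS1
    intro i
    have hO1 : min dB |-dB - (v ihat - lh2)| ≤ OO := by
      have htb := hterm b
      rw [show v b - v ihat = dB from by linarith, abs_of_nonneg hdB0,
        show v b - lh2 = -(-dB - (v ihat - lh2)) from by linarith, abs_neg] at htb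
      exact htb
    have hO2 : min dA |dA - (v ihat - lh2)| ≤ OO := by
      have hta := hterm a
      rw [show v a - v ihat = -dA from by linarith, abs_neg, abs_of_nonneg hdA0,
        show v a - lh2 = -(dA - (v ihat - lh2)) from by linarith, abs_neg] at hta
      exact hta
    have hk := alg4_key (v ihat - v i) dB dA (v ihat - lh2) OO
      (by linarith [hhigh i]) (by linarith [hlow i]) hdB0 h.le hO1 hO2
    rw [show v ihat - v i - max (2 * dB) dA = -(v i - (v ihat - max dA (2 * dB)))
        from by rw [max_comm]; ring, abs_neg,
      show v ihat - v i - (v ihat - lh2) = -(v i - lh2) from by ring, abs_neg,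
      abs_sub_comm (v ihat) (v i)] at hk
    exact hk
end
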